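/- arXiv:2602.03802 — 4 statements merged into one kernel-verified Lean document; each statement's English description precedes it below -/
import Mathlib

section
/- Let τ_1 ≤ ... ≤ τ_n be positive reals and let m* minimize m ↦ τ_m/m over [n]. Then for every m̄ ∈ [n], the harmonic mean bound holds: ( (1/m̄) ∑_{i=1}^{m̄} 1/τ_i )^{-1} ≥ τ_{m*} · m̄ / (m* · ∑_{i=1}^{m̄} 1/i) ≥ τ_{m*} · m̄ / (m* · (1 + log m̄)). -/
lemma mySum_le_one_add_log : ∀ m : ℕ, 1 ≤ m →
    ∑ i ∈ Finset.Icc 1 m, (1 : ℝ) / i ≤ 1 + Real.log m := by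
  intro m hm
  induction m with
  | zero => omega
  | succ k ih =>
    rcases Nat.eq_or_lt_of_le hm with h | h
    · simp [← h]
    · have hk : 1 ≤ k := by omega
      have hk0 : (0 : ℝ) < k := by exact_mod_cast hk
      have hk1 : (0 : ℝ) < (k + 1 : ℕ) := by positivity
      rw [Finset.sum_Icc_succ_top (by omega)]
      have hlog : Real.log k - Real.log (k + 1 : ℕ) ≤ -(1 / (k + 1 : ℕ)) := by
        have h1 : Real.log ((k : ℝ) / ((k + 1 : ℕ) : ℝ)) ≤ (k : ℝ) / ((k + 1 : ℕ) : ℝ) - 1 :=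
          Real.log_le_sub_one_of_pos (by positivity)
        rw [Real.log_div (ne_of_gt hk0) (ne_of_gt hk1)] at h1
        have : (k : ℝ) / ((k + 1 : ℕ) : ℝ) - 1 = -(1 / (k + 1 : ℕ)) := by
          field_simp
          push_cast; ring
        linarith
      have := ih hk
      push_cast at hlog ⊢
      linarith

/-- Harmonic mean bound: for positive nondecreasing `τ` with `m*` minimizing `τ m / m`,
`((1/m̄) ∑_{i=1}^{m̄} 1/τ_i)⁻¹ ≥ τ_{m*} m̄ / (m* ∑_{i=1}^{m̄} 1/i)
  ≥ τ_{m*} m̄ / (m* (1 + log m̄))`. -/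
theorem harmonic_mean_lower_bound (n : ℕ) (hn : 1 ≤ n) (τ : ℕ → ℝ)
    (hpos : ∀ i ∈ Finset.Icc 1 n, 0 < τ i)
    (hmono : ∀ i ∈ Finset.Icc 1 n, ∀ j ∈ Finset.Icc 1 n, i ≤ j → τ i ≤ τ j)
    (mstar : ℕ) (hmstar : mstar ∈ Finset.Icc 1 n)
    (hmin : ∀ m ∈ Finset.Icc 1 n, τ mstar / (mstar : ℝ) ≤ τ m / (m : ℝ)) :
    ∀ mb ∈ Finset.Icc 1 n,
      τ mstar * (mb : ℝ) / ((mstar : ℝ) * ∑ i ∈ Finset.Icc 1 mb, (1 : ℝ) / i) ≤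
        ((1 / (mb : ℝ)) * ∑ i ∈ Finset.Icc 1 mb, 1 / τ i)⁻¹ ∧
      τ mstar * (mb : ℝ) / ((mstar : ℝ) * (1 + Real.log mb)) ≤
        τ mstar * (mb : ℝ) / ((mstar : ℝ) * ∑ i ∈ Finset.Icc 1 mb, (1 : ℝ) / i) := by
  intro mb hmb
  simp only [Finset.mem_Icc] at hmb hmstar
  obtain ⟨hmb1, hmbn⟩ := hmb
  obtain ⟨hms1, hmsn⟩ := hmstar
  have hτs : 0 < τ mstar := hpos mstar (Finset.mem_Icc.mpr ⟨hms1, hmsn⟩)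
  have hmsR : (0 : ℝ) < mstar := by exact_mod_cast hms1
  have hmbR : (0 : ℝ) < mb := by exact_mod_cast hmb1
  set H := ∑ i ∈ Finset.Icc 1 mb, (1 : ℝ) / i with hH
  set S := ∑ i ∈ Finset.Icc 1 mb, (1 : ℝ) / τ i with hS
  have hHpos : 0 < H := by
    apply Finset.sum_pos
    · intro i hi
      simp only [Finset.mem_Icc] at hi
      have : (0 : ℝ) < i := by exact_mod_cast hi.1
      positivity
    · exact ⟨1, Finset.mem_Icc.mpr ⟨le_refl 1, hmb1⟩⟩
  have hSpos : 0 < S := by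
    apply Finset.sum_pos
    · intro i hi
      simp only [Finset.mem_Icc] at hi
      have := hpos i (Finset.mem_Icc.mpr ⟨hi.1, hi.2.trans hmbn⟩)
      positivity
    · exact ⟨1, Finset.mem_Icc.mpr ⟨le_refl 1, hmb1⟩⟩
  have key : S ≤ (mstar : ℝ) / τ mstar * H := by
    rw [hS, hH, Finset.mul_sum]
    apply Finset.sum_le_sum
    intro i hi
    simp only [Finset.mem_Icc] at hi
    have hin : i ∈ Finset.Icc 1 n := Finset.mem_Icc.mpr ⟨hi.1, hi.2.trans hmbn⟩
    have hiR : (0 : ℝ) < i := by exact_mod_cast hi.1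
    have hτi : 0 < τ i := hpos i hin
    have h1 := hmin i hin
    rw [div_le_div_iff₀ hmsR hiR] at h1
    have heq : (mstar : ℝ) / τ mstar * (1 / i) = (mstar : ℝ) / (τ mstar * i) := by
      field_simp
    rw [heq, div_le_div_iff₀ hτi (by positivity)]
    nlinarith
  constructor
  · have h2 : (1 / (mb : ℝ)) * S ≤ (mstar : ℝ) * H / (τ mstar * mb) := by
      have key' : τ mstar * S ≤ (mstar : ℝ) * H := by
        rw [mul_comm, ← le_div_iff₀ hτs]
        calc S ≤ (mstar : ℝ) / τ mstar * H := key
          _ = (mstar : ℝ) * H / τ mstar := by ring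
      rw [le_div_iff₀ (by positivity)]
      have heq : 1 / (mb : ℝ) * S * (τ mstar * mb) = τ mstar * S := by
        field_simp
      rw [heq]; exact key'
    calc τ mstar * (mb : ℝ) / ((mstar : ℝ) * H)
        = ((mstar : ℝ) * H / (τ mstar * mb))⁻¹ := by
          rw [inv_div]
      _ ≤ ((1 / (mb : ℝ)) * S)⁻¹ := by
          apply inv_anti₀ (by positivity) h2
  · apply div_le_div_of_nonneg_left (by positivity) (by positivity)
    have := mySum_le_one_add_log mb hmb1
    exact mul_le_mul_of_nonneg_left this (le_of_lt hmsR)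
end

section
/- Let τ_1 ≤ ... ≤ τ_n be positive reals, and define T_sync = min_{m ∈ [n]} [ τ_m · max{A, B/m} ] and T_opt = min_{m ∈ [n]} [ ( (1/m) ∑_{i=1}^m 1/τ_i )^{-1} · max{A, B/m} ] for positive constants A, B with B ≥ A·n. Then T_sync ≤ C · log(n+1) · T_opt for some universal constant C. -/
lemma harmonic_le_two_log (m : ℕ) :
    ∑ i ∈ Finset.Icc 1 m, (1:ℝ)/i ≤ 2 * Real.log ((m:ℝ)+1) := by
  induction m with
  | zero => simp
  | succ m ih =>
    rw [Finset.sum_Icc_succ_top (by omega : 1 ≤ m + 1)]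
    have hm1 : (0:ℝ) < (m:ℝ) + 1 := by positivity
    have hm2 : (0:ℝ) < (m:ℝ) + 2 := by positivity
    have hlog := Real.log_le_sub_one_of_pos (x := ((m:ℝ)+1)/((m:ℝ)+2)) (by positivity)
    rw [Real.log_div (by positivity) (by positivity)] at hlog
    have h1 : ((m:ℝ)+1)/((m:ℝ)+2) - 1 = -(1/((m:ℝ)+2)) := by
      field_simp
      norm_num
    rw [h1] at hlog
    have h3 : 1/((m:ℝ)+2) ≤ Real.log ((m:ℝ)+2) - Real.log ((m:ℝ)+1) := by linarith
    have h4 : 1/((m:ℝ)+1) ≤ 2 * (1/((m:ℝ)+2)) := by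
      rw [show (2:ℝ) * (1/((m:ℝ)+2)) = 2/((m:ℝ)+2) by ring,
        div_le_div_iff₀ (by positivity) (by positivity)]
      linarith
    have h2 : 1/((m:ℝ)+1) ≤ 2 * (Real.log ((m:ℝ)+2) - Real.log ((m:ℝ)+1)) := by linarith
    push_cast
    rw [show ((m:ℝ)+1+1) = (m:ℝ)+2 by ring]
    linarith

/-- In the high-noise regime `B ≥ A n`, the synchronous time complexity
`T_sync = min_m τ_m max{A, B/m}` is within a universal constant times `log (n+1)` of the
optimal asynchronous time complexity
`T_opt = min_m ((1/m) ∑_{i≤m} 1/τ_i)⁻¹ max{A, B/m}`. -/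
theorem sync_near_optimal :
    ∃ C : ℝ, 0 < C ∧
      ∀ (n : ℕ) (hn : 1 ≤ n) (τ : ℕ → ℝ),
        (∀ i ∈ Finset.Icc 1 n, 0 < τ i) →
        (∀ i ∈ Finset.Icc 1 n, ∀ j ∈ Finset.Icc 1 n, i ≤ j → τ i ≤ τ j) →
        ∀ A B : ℝ, 0 < A → 0 < B → A * (n : ℝ) ≤ B →
          (Finset.Icc 1 n).inf' (Finset.nonempty_Icc.mpr hn)
              (fun m => τ m * max A (B / (m : ℝ))) ≤
            C * Real.log ((n : ℝ) + 1) *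
              (Finset.Icc 1 n).inf' (Finset.nonempty_Icc.mpr hn)
                (fun m => ((1 / (m : ℝ)) * ∑ i ∈ Finset.Icc 1 m, 1 / τ i)⁻¹ *
                  max A (B / (m : ℝ))) := by
  refine ⟨2, by norm_num, ?_⟩
  intro n hn τ hτpos _ A B hA hB hAB
  have hne := Finset.nonempty_Icc.mpr hn
  set f : ℕ → ℝ := fun m => τ m * max A (B / (m : ℝ)) with hf
  set L : ℝ := (Finset.Icc 1 n).inf' hne f with hLdef
  have hn' : (1:ℝ) ≤ (n:ℝ) := by exact_mod_cast hn
  have hlogpos : 0 < Real.log ((n:ℝ) + 1) := Real.log_pos (by linarith)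
  -- max A (B/m) = B/m for m ∈ Icc 1 n
  have hmax : ∀ m ∈ Finset.Icc 1 n, max A (B / (m:ℝ)) = B / (m:ℝ) := by
    intro m hm
    rw [Finset.mem_Icc] at hm
    have hm0 : (0:ℝ) < (m:ℝ) := by exact_mod_cast (by omega : 0 < m)
    have hmn : (m:ℝ) ≤ (n:ℝ) := by exact_mod_cast hm.2
    refine max_eq_right ?_
    rw [le_div_iff₀ hm0]
    nlinarith
  -- L > 0
  have hLpos : 0 < L := by
    obtain ⟨j, hj, hjeq⟩ := Finset.exists_mem_eq_inf' hne f
    rw [hLdef, hjeq]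
    exact mul_pos (hτpos j hj) (lt_of_lt_of_le hA (le_max_left _ _))
  -- per-index bound
  have hidx : ∀ i ∈ Finset.Icc 1 n, 1 / τ i ≤ (B / L) * (1 / (i:ℝ)) := by
    intro i hi
    have hi1 : 1 ≤ i := (Finset.mem_Icc.mp hi).1
    have hi0 : (0:ℝ) < (i:ℝ) := by exact_mod_cast (by omega : 0 < i)
    have hLle : L ≤ τ i * max A (B / (i:ℝ)) := Finset.inf'_le f hi
    rw [hmax i hi] at hLle
    have hτi := hτpos i hi
    have key : L * (i:ℝ) ≤ τ i * B := by
      have h := mul_le_mul_of_nonneg_right hLle hi0.le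
      have heq : τ i * (B / (i:ℝ)) * (i:ℝ) = τ i * B := by field_simp
      linarith
    rw [show B / L * (1/(i:ℝ)) = B / (L * (i:ℝ)) by ring,
      div_le_div_iff₀ hτi (by positivity)]
    nlinarith
  -- main bound for each m
  obtain ⟨m, hm, hmeq⟩ := Finset.exists_mem_eq_inf' hne
    (fun m => ((1 / (m : ℝ)) * ∑ i ∈ Finset.Icc 1 m, 1 / τ i)⁻¹ * max A (B / (m : ℝ)))
  rw [hmeq, hmax m hm]
  have hm1 : 1 ≤ m := (Finset.mem_Icc.mp hm).1
  have hmn : m ≤ n := (Finset.mem_Icc.mp hm).2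
  have hm0 : (0:ℝ) < (m:ℝ) := by exact_mod_cast (by omega : 0 < m)
  set S : ℝ := ∑ i ∈ Finset.Icc 1 m, 1 / τ i with hS
  have hSpos : 0 < S := by
    apply Finset.sum_pos
    · intro i hi
      have : i ∈ Finset.Icc 1 n := by
        rw [Finset.mem_Icc] at hi ⊢; omega
      exact one_div_pos.mpr (hτpos i this)
    · exact Finset.nonempty_Icc.mpr hm1
  have hSle : S ≤ (B / L) * (2 * Real.log ((n:ℝ) + 1)) := by
    have h1 : S ≤ ∑ i ∈ Finset.Icc 1 m, (B / L) * (1 / (i:ℝ)) := by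
      apply Finset.sum_le_sum
      intro i hi
      apply hidx
      rw [Finset.mem_Icc] at hi ⊢; omega
    rw [← Finset.mul_sum] at h1
    have h2 := harmonic_le_two_log m
    have h3 : Real.log ((m:ℝ)+1) ≤ Real.log ((n:ℝ)+1) := by
      apply Real.log_le_log (by positivity)
      have : (m:ℝ) ≤ (n:ℝ) := by exact_mod_cast hmn
      linarith
    have hBL : 0 < B / L := by positivity
    calc S ≤ (B / L) * ∑ i ∈ Finset.Icc 1 m, 1 / (i:ℝ) := h1
    _ ≤ (B / L) * (2 * Real.log ((m:ℝ)+1)) := by nlinarith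
    _ ≤ (B / L) * (2 * Real.log ((n:ℝ)+1)) := by nlinarith
  have hterm : ((1 / (m:ℝ)) * S)⁻¹ * (B / (m:ℝ)) = B / S := by
    field_simp
  rw [hterm, mul_div_assoc' (2 * Real.log ((n:ℝ)+1)) B S, le_div_iff₀ hSpos]
  have h5 := mul_le_mul_of_nonneg_left hSle (le_of_lt hLpos)
  have h6 : L * (B / L * (2 * Real.log ((n:ℝ)+1))) = 2 * Real.log ((n:ℝ)+1) * B := by
    field_simp
  linarith
end

section
/- Let v > 0 and p ∈ [0, 1). Suppose functions v_i : ℝ_+ → ℝ_+ (i = 1,...,n) satisfy: for every t, v_i(t) ≤ v for all i, and ∑_{i=1}^n v_i(t) ≥ (1−p) n v. Then for any interval [t₀, t], the number n̄ of indices i with ∫_{t₀}^{t} v_i ≤ (1/2)(t − t₀) v satisfies n̄ ≤ 2pn; hence at least (1 − 2p)n workers satisfy ∫_{t₀}^{t} v_i ≥ (1/2)(t − t₀)v. -/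
set_option maxHeartbeats 1000000

open MeasureTheory
open scoped Classical

/-- Partial participation counting: if each `v_i ≤ v` pointwise and
`∑ v_i(t) ≥ (1−p) n v` for all `t`, then on any interval `[t₀, t]` the number of workers
accumulating at most half of the full work `(1/2)(t − t₀)v` is at most `2pn`; hence at
least `(1 − 2p)n` workers accumulate at least `(1/2)(t − t₀)v`. -/
theorem partial_participation_count (n : ℕ) (p vc : ℝ)
    (hp0 : 0 ≤ p) (hp1 : p < 1) (hv : 0 < vc)
    (v : ℕ → ℝ → ℝ)
    (hnn : ∀ i ∈ Finset.Icc 1 n, ∀ t : ℝ, 0 ≤ v i t)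
    (hle : ∀ i ∈ Finset.Icc 1 n, ∀ t : ℝ, v i t ≤ vc)
    (hsum : ∀ t : ℝ, (1 - p) * (n : ℝ) * vc ≤ ∑ i ∈ Finset.Icc 1 n, v i t)
    (hint : ∀ i ∈ Finset.Icc 1 n, ∀ a b : ℝ, IntervalIntegrable (v i) volume a b)
    (t0 t : ℝ) (ht : t0 < t) :
    (((Finset.Icc 1 n).filter
        (fun i => (∫ s in t0..t, v i s) ≤ (1 / 2) * (t - t0) * vc)).card : ℝ) ≤
      2 * p * (n : ℝ) ∧
    (1 - 2 * p) * (n : ℝ) ≤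
      (((Finset.Icc 1 n).filter
        (fun i => (1 / 2) * (t - t0) * vc ≤ ∫ s in t0..t, v i s)).card : ℝ) := by
  have hTpos : 0 < t - t0 := by linarith
  -- upper bound on each integral
  have hIub : ∀ i ∈ Finset.Icc 1 n, (∫ s in t0..t, v i s) ≤ (t - t0) * vc := by
    intro i hi
    have := intervalIntegral.integral_mono_on (μ := volume) ht.le (hint i hi t0 t)
      (intervalIntegrable_const (c := vc)) (fun s _ => hle i hi s)
    simpa [smul_eq_mul, mul_comm] using this
  -- lower bound on sum of integrals
  have hsumI : (1 - p) * (n : ℝ) * vc * (t - t0) ≤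
      ∑ i ∈ Finset.Icc 1 n, ∫ s in t0..t, v i s := by
    have hintsum : IntervalIntegrable (fun s => ∑ i ∈ Finset.Icc 1 n, v i s) volume t0 t := by
      have h := IntervalIntegrable.sum (μ := volume) (a := t0) (b := t) (Finset.Icc 1 n)
        (f := v) (fun i hi => hint i hi t0 t)
      have he : (∑ i ∈ Finset.Icc 1 n, v i) = fun s => ∑ i ∈ Finset.Icc 1 n, v i s := by
        funext s; simp
      rwa [he] at h
    have h1 := intervalIntegral.integral_mono_on (μ := volume) ht.le
      (intervalIntegrable_const (c := (1 - p) * (n : ℝ) * vc)) hintsum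
      (fun s _ => hsum s)
    rw [intervalIntegral.integral_const] at h1
    have h2 : (∫ s in t0..t, ∑ i ∈ Finset.Icc 1 n, v i s) =
        ∑ i ∈ Finset.Icc 1 n, ∫ s in t0..t, v i s :=
      intervalIntegral.integral_finset_sum (μ := volume) (fun i hi => hint i hi t0 t)
    rw [h2] at h1
    calc (1 - p) * (n : ℝ) * vc * (t - t0) = (t - t0) • ((1 - p) * (n : ℝ) * vc) := by
          simp [smul_eq_mul]; ring
      _ ≤ _ := h1
  have hcardS : ((((Finset.Icc 1 n).filter
      (fun i => (∫ s in t0..t, v i s) ≤ (1 / 2) * (t - t0) * vc)).card : ℝ)) ≤ 2 * p * n := by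
    have hsplit := Finset.sum_filter_add_sum_filter_not (Finset.Icc 1 n)
      (fun i => (∫ s in t0..t, v i s) ≤ (1 / 2) * (t - t0) * vc)
      (fun i => ∫ s in t0..t, v i s)
    set S := (Finset.Icc 1 n).filter
      (fun i => (∫ s in t0..t, v i s) ≤ (1 / 2) * (t - t0) * vc) with hS
    set Sc := (Finset.Icc 1 n).filter
      (fun i => ¬ ((∫ s in t0..t, v i s) ≤ (1 / 2) * (t - t0) * vc)) with hSc
    have hS1 : ∑ i ∈ S, (∫ s in t0..t, v i s) ≤ S.card * ((1/2)*(t - t0)*vc) := by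
      calc ∑ i ∈ S, (∫ s in t0..t, v i s) ≤ ∑ _i ∈ S, ((1/2)*(t - t0)*vc) :=
            Finset.sum_le_sum (fun i hi => (Finset.mem_filter.mp hi).2)
        _ = S.card * ((1/2)*(t - t0)*vc) := by simp [mul_comm]
    have hS2 : ∑ i ∈ Sc, (∫ s in t0..t, v i s) ≤ Sc.card * ((t - t0) * vc) := by
      calc ∑ i ∈ Sc, (∫ s in t0..t, v i s) ≤ ∑ _i ∈ Sc, ((t - t0)*vc) :=
            Finset.sum_le_sum (fun i hi => hIub i (Finset.mem_filter.mp hi).1)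
        _ = Sc.card * ((t - t0)*vc) := by simp [mul_comm]
    have hcards : S.card + Sc.card = n := by
      rw [hS, hSc, Finset.card_filter_add_card_filter_not]
      simp
    have hc : (Sc.card : ℝ) = (n : ℝ) - S.card := by
      have := congrArg (Nat.cast : ℕ → ℝ) hcards
      push_cast at this; linarith
    rw [hc] at hS2
    have hkey : (1 - p) * (n : ℝ) * vc * (t - t0) ≤
        S.card * ((1/2)*(t - t0)*vc) + ((n : ℝ) - S.card) * ((t - t0) * vc) := by
      rw [← hsplit] at hsumI; linarith
    nlinarith [mul_pos hTpos hv]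
  refine ⟨hcardS, ?_⟩
  have hsub : (Finset.Icc 1 n).filter
      (fun i => ¬ ((∫ s in t0..t, v i s) ≤ (1 / 2) * (t - t0) * vc)) ⊆
      (Finset.Icc 1 n).filter (fun i => (1 / 2) * (t - t0) * vc ≤ ∫ s in t0..t, v i s) :=
    Finset.monotone_filter_right _ (fun i _ hi => le_of_not_ge hi)
  have hcards : ((Finset.Icc 1 n).filter
      (fun i => (∫ s in t0..t, v i s) ≤ (1 / 2) * (t - t0) * vc)).card +
      ((Finset.Icc 1 n).filter
      (fun i => ¬ ((∫ s in t0..t, v i s) ≤ (1 / 2) * (t - t0) * vc))).card = n := by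
    rw [Finset.card_filter_add_card_filter_not]
    simp
  have hmono := Finset.card_le_card hsub
  have h1 : (((Finset.Icc 1 n).filter
      (fun i => ¬ ((∫ s in t0..t, v i s) ≤ (1 / 2) * (t - t0) * vc))).card : ℝ) ≤
      (((Finset.Icc 1 n).filter
      (fun i => (1 / 2) * (t - t0) * vc ≤ ∫ s in t0..t, v i s)).card : ℝ) :=
    Nat.cast_le.mpr hmono
  have h2 := congrArg (Nat.cast : ℕ → ℝ) hcards
  push_cast at h2
  linarith
end

section
/- Under the partial participation setup (each v_i ≤ v pointwise, ∑_i v_i(t) ≥ (1−p)nv for all t, p < 0.4), the m-Synchronous recursion t̄_{k+1} = min{ t : max_{|S|=m} min_{i∈S} ⌊∫_{t̄_k}^t v_i⌋ = 2 } with m ≤ ⌊(1−2p)n⌋ satisfies t̄_{k+1} ≤ t̄_k + 4/v, and hence t̄_K ≤ 4K/v. -/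
open MeasureTheory
open scoped Classical

set_option maxHeartbeats 2000000 in
/-- Under partial participation (`v_i ≤ v`, `∑ v_i(t) ≥ (1−p)nv`, `p < 0.4`) and
`1 ≤ m ≤ ⌊(1−2p)n⌋`, the `m`-Synchronous recursion
`t̄_{k+1} = min{t : max_{|S|=m} min_{i∈S} ⌊∫_{t̄_k}^t v_i⌋ = 2}` satisfies
`t̄_{k+1} ≤ t̄_k + 4/v`, hence `t̄_K ≤ 4K/v`. -/
theorem msync_partial_participation (n m : ℕ) (p vc : ℝ)
    (hp0 : 0 ≤ p) (hp : p < 0.4) (hv : 0 < vc)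
    (v : ℕ → ℝ → ℝ)
    (hnn : ∀ i ∈ Finset.Icc 1 n, ∀ t : ℝ, 0 ≤ v i t)
    (hle : ∀ i ∈ Finset.Icc 1 n, ∀ t : ℝ, v i t ≤ vc)
    (hsum : ∀ t : ℝ, (1 - p) * (n : ℝ) * vc ≤ ∑ i ∈ Finset.Icc 1 n, v i t)
    (hint : ∀ i ∈ Finset.Icc 1 n, ∀ a b : ℝ, IntervalIntegrable (v i) volume a b)
    (hm1 : 1 ≤ m) (hm : (m : ℝ) ≤ (1 - 2 * p) * (n : ℝ))
    (tb : ℕ → ℝ) (h0 : tb 0 = 0)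
    (hrec : ∀ k : ℕ, tb (k + 1) = sInf {t : ℝ | tb k ≤ t ∧
      ((Finset.Icc 1 n).powerset.filter (fun S => S.card = m)).sup
        (fun S => S.inf (fun i => (⌊∫ s in tb k..t, v i s⌋₊ : ℕ∞))) = 2}) :
    (∀ k : ℕ, tb (k + 1) ≤ tb k + 4 / vc) ∧
    (∀ K : ℕ, tb K ≤ 4 * (K : ℝ) / vc) := by
  have key : ∀ k : ℕ, tb (k + 1) ≤ tb k + 4 / vc := by
    intro k
    set a := tb k with ha
    set T := a + 4 / vc with hT
    have h4v : 0 < 4 / vc := by positivity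
    have haT : a ≤ T := by simp [hT]; linarith
    have hTa : T - a = 4 / vc := by rw [hT]; ring
    set g : ℕ → ℝ → ℝ := fun i t => ∫ s in a..t, v i s with hg
    have hgcont : ∀ i ∈ Finset.Icc 1 n, Continuous (g i) := fun i hi =>
      intervalIntegral.continuous_primitive (hint i hi) a
    have hg0 : ∀ i, g i a = 0 := fun i => intervalIntegral.integral_same
    have hgmono : ∀ i ∈ Finset.Icc 1 n, ∀ b c : ℝ, b ≤ c → g i b ≤ g i c := by
      intro i hi b c hbc
      have hadd : g i b + ∫ s in b..c, v i s = g i c :=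
        intervalIntegral.integral_add_adjacent_intervals (hint i hi a b) (hint i hi b c)
      have hnn' : 0 ≤ ∫ s in b..c, v i s :=
        intervalIntegral.integral_nonneg hbc (fun x _ => hnn i hi x)
      linarith
    have hgnonneg : ∀ i ∈ Finset.Icc 1 n, ∀ t : ℝ, a ≤ t → 0 ≤ g i t := by
      intro i hi t hat
      have := hgmono i hi a t hat
      rw [hg0 i] at this; exact this
    have hgleT : ∀ i ∈ Finset.Icc 1 n, g i T ≤ 4 := by
      intro i hi
      have h1 : g i T ≤ ∫ s in a..T, vc :=
        intervalIntegral.integral_mono_on haT (hint i hi a T)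
          intervalIntegrable_const (fun x _ => hle i hi x)
      have h2 : (∫ s in a..T, vc) = (T - a) * vc := by
        rw [intervalIntegral.integral_const]; simp [smul_eq_mul]
      have h3 : (T - a) * vc = 4 := by
        rw [hTa]; field_simp
      linarith
    -- the crossed set
    set A := (Finset.Icc 1 n).filter (fun i => 2 ≤ g i T) with hA
    have hAsub : A ⊆ Finset.Icc 1 n := Finset.filter_subset _ _
    have hAcard : m ≤ A.card := by
      have hsumg : (1 - p) * (n : ℝ) * vc * (T - a) ≤ ∑ i ∈ Finset.Icc 1 n, g i T := by
        have heq : (∑ i ∈ Finset.Icc 1 n, g i T) = ∫ s in a..T, ∑ i ∈ Finset.Icc 1 n, v i s :=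
          (intervalIntegral.integral_finset_sum (fun i hi => hint i hi a T)).symm
        have hintsum : IntervalIntegrable (fun x => ∑ i ∈ Finset.Icc 1 n, v i x) volume a T := by
          have hh := IntervalIntegrable.sum (μ := volume) (a := a) (b := T)
            (Finset.Icc 1 n) (f := v) (fun i hi => hint i hi a T)
          rw [Finset.sum_fn] at hh; exact hh
        have h1 : (∫ s in a..T, (1 - p) * (n : ℝ) * vc) ≤
            ∫ s in a..T, ∑ i ∈ Finset.Icc 1 n, v i s :=
          intervalIntegral.integral_mono_on haT intervalIntegrable_const
            hintsum (fun x _ => hsum x)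
        have h2 : (∫ s in a..T, (1 - p) * (n : ℝ) * vc) = (T - a) * ((1 - p) * (n : ℝ) * vc) := by
          rw [intervalIntegral.integral_const]; simp [smul_eq_mul]
        rw [heq]; nlinarith [h1, h2]
      -- split the sum
      have hsplit : (∑ i ∈ Finset.Icc 1 n, g i T) ≤ 4 * (A.card : ℝ) + 2 * ((n : ℝ) - A.card) := by
        have h1 : (∑ i ∈ A, g i T) ≤ 4 * (A.card : ℝ) := by
          calc (∑ i ∈ A, g i T) ≤ ∑ _i ∈ A, (4 : ℝ) :=
                Finset.sum_le_sum (fun i hi => hgleT i (hAsub hi))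
            _ = 4 * (A.card : ℝ) := by rw [Finset.sum_const]; push_cast; ring
        have h2 : (∑ i ∈ (Finset.Icc 1 n).filter (fun i => ¬ 2 ≤ g i T), g i T)
            ≤ 2 * (((Finset.Icc 1 n).filter (fun i => ¬ 2 ≤ g i T)).card : ℝ) := by
          calc (∑ i ∈ (Finset.Icc 1 n).filter (fun i => ¬ 2 ≤ g i T), g i T)
              ≤ ∑ _i ∈ (Finset.Icc 1 n).filter (fun i => ¬ 2 ≤ g i T), (2 : ℝ) := by
                refine Finset.sum_le_sum (fun i hi => ?_)
                have := (Finset.mem_filter.mp hi).2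
                linarith [not_le.mp this]
            _ = _ := by rw [Finset.sum_const]; push_cast; ring
        have hcards : A.card + ((Finset.Icc 1 n).filter (fun i => ¬ 2 ≤ g i T)).card = n := by
          rw [hA, Finset.card_filter_add_card_filter_not]
          simp [Nat.card_Icc]
        have hsum_eq : (∑ i ∈ Finset.Icc 1 n, g i T) =
            (∑ i ∈ A, g i T) + ∑ i ∈ (Finset.Icc 1 n).filter (fun i => ¬ 2 ≤ g i T), g i T := by
          rw [hA, Finset.sum_filter_add_sum_filter_not]
        have : (((Finset.Icc 1 n).filter (fun i => ¬ 2 ≤ g i T)).card : ℝ) = (n : ℝ) - A.card := by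
          have hc := congrArg (Nat.cast : ℕ → ℝ) hcards
          push_cast at hc
          linarith
        rw [hsum_eq]
        rw [this] at h2
        linarith
      have hTa4 : (1 - p) * (n : ℝ) * vc * (T - a) = 4 * (1 - p) * (n : ℝ) := by
        rw [hTa]; field_simp
      have hreal : (m : ℝ) ≤ (A.card : ℝ) := by
        have h1 : 4 * (1 - p) * (n : ℝ) ≤ 4 * (A.card : ℝ) + 2 * ((n : ℝ) - A.card) := by
          rw [← hTa4]; linarith
        have h2 : (1 - 2 * p) * (n : ℝ) ≤ (A.card : ℝ) := by nlinarith
        linarith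
      exact_mod_cast hreal
    -- crossing times
    set s : ℕ → ℝ := fun i => sInf {t | a ≤ t ∧ g i t = 2} with hs
    have hsprop : ∀ i ∈ A, a ≤ s i ∧ g i (s i) = 2 ∧ s i ≤ T := by
      intro i hiA
      have hi : i ∈ Finset.Icc 1 n := hAsub hiA
      have hgiT : 2 ≤ g i T := (Finset.mem_filter.mp hiA).2
      have hIVT : ∃ u ∈ Set.Icc a T, g i u = 2 := by
        have := intermediate_value_Icc haT (hgcont i hi).continuousOn
        have h2mem : (2 : ℝ) ∈ Set.Icc (g i a) (g i T) := by
          rw [hg0 i]; exact ⟨by norm_num, hgiT⟩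
        exact this h2mem
      obtain ⟨u, hu, hgu⟩ := hIVT
      have hne : {t | a ≤ t ∧ g i t = 2}.Nonempty := ⟨u, hu.1, hgu⟩
      have hbdd : BddBelow {t | a ≤ t ∧ g i t = 2} := ⟨a, fun x hx => hx.1⟩
      have hcl : IsClosed {t | a ≤ t ∧ g i t = 2} := by
        have h1 : IsClosed {t : ℝ | a ≤ t} := isClosed_Ici
        have h2 : IsClosed {t : ℝ | g i t = 2} :=
          isClosed_eq (hgcont i hi) continuous_const
        exact h1.inter h2
      have hmem := hcl.csInf_mem hne hbdd
      refine ⟨hmem.1, hmem.2, ?_⟩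
      exact le_trans (csInf_le hbdd ⟨hu.1, hgu⟩) hu.2
    -- pick a minimizing m-subset
    obtain ⟨Sw, hSw⟩ := Finset.exists_subset_card_eq hAcard
    have h𝒮ne : (A.powersetCard m).Nonempty :=
      ⟨Sw, Finset.mem_powersetCard.mpr ⟨hSw.1, hSw.2⟩⟩
    obtain ⟨S₀, hS₀mem, hS₀min⟩ := Finset.exists_min_image (A.powersetCard m)
      (fun S => S.sup (fun i => (s i : WithBot ℝ))) h𝒮ne
    obtain ⟨hS₀sub, hS₀card⟩ := Finset.mem_powersetCard.mp hS₀mem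
    have hS₀ne : S₀.Nonempty := Finset.card_pos.mp (by omega)
    set t' : ℝ := S₀.sup' hS₀ne s with ht'
    have ht'sup : (t' : WithBot ℝ) = S₀.sup (fun i => (s i : WithBot ℝ)) := by
      rw [ht', Finset.coe_sup']; rfl
    have hat' : a ≤ t' := by
      obtain ⟨i₀, hi₀⟩ := hS₀ne
      exact le_trans (hsprop i₀ (hS₀sub hi₀)).1 (Finset.le_sup' s hi₀)
    have ht'T : t' ≤ T := by
      apply Finset.sup'_le
      intro i hi
      exact (hsprop i (hS₀sub hi)).2.2
    -- few workers have crossed strictly before t'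
    have hBcard : ((A.filter (fun i => s i < t')).card) < m := by
      by_contra hcon
      push_neg at hcon
      obtain ⟨S₁, hS₁sub, hS₁card⟩ := Finset.exists_subset_card_eq hcon
      have hS₁mem : S₁ ∈ A.powersetCard m :=
        Finset.mem_powersetCard.mpr ⟨hS₁sub.trans (Finset.filter_subset _ _), hS₁card⟩
      have hlt : S₁.sup (fun i => (s i : WithBot ℝ)) < (t' : WithBot ℝ) := by
        rw [Finset.sup_lt_iff (by exact WithBot.bot_lt_coe t')]
        intro i hi
        exact_mod_cast (Finset.mem_filter.mp (hS₁sub hi)).2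
      have := hS₀min S₁ hS₁mem
      rw [← ht'sup] at this
      exact absurd (lt_of_le_of_lt this hlt) (lt_irrefl _)
    have hB3 : ((Finset.Icc 1 n).filter (fun i => 3 ≤ g i t')).card < m := by
      refine lt_of_le_of_lt (Finset.card_le_card ?_) hBcard
      intro i hi
      obtain ⟨hiIcc, hgi3⟩ := Finset.mem_filter.mp hi
      have hiA : i ∈ A := by
        rw [hA, Finset.mem_filter]
        refine ⟨hiIcc, le_trans (by linarith) (hgmono i hiIcc t' T ht'T)⟩
      obtain ⟨has, hgs, _⟩ := hsprop i hiA
      have hsle : s i ≤ t' := by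
        -- there is a crossing in [a, t']
        have hIVT : ∃ u ∈ Set.Icc a t', g i u = 2 := by
          have := intermediate_value_Icc hat' (hgcont i hiIcc).continuousOn
          have h2mem : (2 : ℝ) ∈ Set.Icc (g i a) (g i t') := by
            rw [hg0 i]; exact ⟨by norm_num, by linarith⟩
          exact this h2mem
        obtain ⟨u, hu, hgu⟩ := hIVT
        have hbdd : BddBelow {t | a ≤ t ∧ g i t = 2} := ⟨a, fun x hx => hx.1⟩
        exact le_trans (csInf_le hbdd ⟨hu.1, hgu⟩) hu.2
      have hne : s i ≠ t' := by
        intro heq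
        rw [heq] at hgs
        linarith
      exact Finset.mem_filter.mpr ⟨hiA, lt_of_le_of_ne hsle hne⟩
    -- t' is in the defining set
    have hmemset : t' ∈ {t : ℝ | a ≤ t ∧
        ((Finset.Icc 1 n).powerset.filter (fun S => S.card = m)).sup
          (fun S => S.inf (fun i => (⌊∫ s in a..t, v i s⌋₊ : ℕ∞))) = 2} := by
      refine ⟨hat', le_antisymm ?_ ?_⟩
      · -- sup ≤ 2
        apply Finset.sup_le
        intro S hS
        obtain ⟨hSpow, hScard⟩ := Finset.mem_filter.mp hS
        have hSsub : S ⊆ Finset.Icc 1 n := Finset.mem_powerset.mp hSpow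
        have hex : ∃ i ∈ S, ¬ 3 ≤ g i t' := by
          by_contra hcon
          push_neg at hcon
          have : S ⊆ (Finset.Icc 1 n).filter (fun i => 3 ≤ g i t') := by
            intro i hi
            exact Finset.mem_filter.mpr ⟨hSsub hi, hcon i hi⟩
          have := Finset.card_le_card this
          omega
        obtain ⟨i, hiS, hlt3⟩ := hex
        refine le_trans (Finset.inf_le hiS) ?_
        have h0le : 0 ≤ g i t' := hgnonneg i (hSsub hiS) t' hat'
        have hfl : ⌊g i t'⌋₊ < 3 := (Nat.floor_lt h0le).mpr (by push_neg at hlt3; exact_mod_cast hlt3)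
        have hfl2 : ⌊g i t'⌋₊ ≤ 2 := by omega
        calc ((⌊g i t'⌋₊ : ℕ∞)) ≤ ((2 : ℕ) : ℕ∞) := by exact_mod_cast hfl2
          _ = 2 := by norm_cast
      · -- 2 ≤ sup
        have hS₀Icc : S₀ ∈ (Finset.Icc 1 n).powerset.filter (fun S => S.card = m) :=
          Finset.mem_filter.mpr ⟨Finset.mem_powerset.mpr (hS₀sub.trans hAsub), hS₀card⟩
        refine le_trans ?_ (Finset.le_sup hS₀Icc)
        apply Finset.le_inf
        intro i hi
        obtain ⟨has, hgs, _⟩ := hsprop i (hS₀sub hi)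
        have hsle : s i ≤ t' := Finset.le_sup' s hi
        have hg2 : 2 ≤ g i t' := by
          have := hgmono i (hAsub (hS₀sub hi)) (s i) t' hsle
          linarith
        have hfl : 2 ≤ ⌊g i t'⌋₊ := Nat.le_floor (by exact_mod_cast hg2)
        calc (2 : ℕ∞) = ((2 : ℕ) : ℕ∞) := by norm_cast
          _ ≤ (⌊g i t'⌋₊ : ℕ∞) := by exact_mod_cast hfl
    have hbdd : BddBelow {t : ℝ | a ≤ t ∧
        ((Finset.Icc 1 n).powerset.filter (fun S => S.card = m)).sup
          (fun S => S.inf (fun i => (⌊∫ s in a..t, v i s⌋₊ : ℕ∞))) = 2} :=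
      ⟨a, fun x hx => hx.1⟩
    calc tb (k + 1) = sInf _ := hrec k
      _ ≤ t' := csInf_le hbdd hmemset
      _ ≤ T := ht'T
  refine ⟨key, ?_⟩
  intro K
  induction K with
  | zero => simp [h0]
  | succ K ih =>
    have h1 := key K
    calc tb (K+1) ≤ 4 * (K : ℝ) / vc + 4 / vc := by linarith
      _ = 4 * ((K:ℝ)+1) / vc := by field_simp
      _ = 4 * ((K+1 : ℕ) : ℝ) / vc := by push_cast; ring
end
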